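/- Let X ∈ ℝ^{n×p}, Y ∈ ℝ^{n×q}, Z ∈ ℝ^{n×r} each have orthonormal columns, and define D₂(A,B) = sqrt(max(dim(A),dim(B)) − ‖AᵀB‖_F²) for such matrices. Then D₂(X,Y) ≤ D₂(X,Z) + D₂(Z,Y) (triangle inequality). -/

import Mathlib

open Matrix

/-- A matrix has orthonormal columns. -/
def hasOrthonormalCols {n p : ℕ} (X : Matrix (Fin n) (Fin p) ℝ) : Prop := Xᵀ * X = 1

/-- Squared Frobenius norm: ‖A‖_F² = tr(AᵀA). -/
noncomputable def frobSq {a b : ℕ} (A : Matrix (Fin a) (Fin b) ℝ) : ℝ := (Aᵀ * A).trace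

/-- Frobenius norm. -/
noncomputable def frob {a b : ℕ} (A : Matrix (Fin a) (Fin b) ℝ) : ℝ := Real.sqrt (frobSq A)

lemma hermMMt {a b : ℕ} (M : Matrix (Fin a) (Fin b) ℝ) : (M * Mᵀ).IsHermitian := by
  simpa [Matrix.conjTranspose_eq_transpose_of_trivial] using
    Matrix.isHermitian_mul_conjTranspose_self M

lemma hermMtM {a b : ℕ} (M : Matrix (Fin a) (Fin b) ℝ) : (Mᵀ * M).IsHermitian := by
  simpa [Matrix.conjTranspose_eq_transpose_of_trivial] using
    Matrix.isHermitian_conjTranspose_mul_self M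

/-- The singular values of a matrix `M`, as square roots of the eigenvalues of the
smaller of the Gram matrices `M Mᵀ` and `Mᵀ M`; there are `min a b` of them. -/
noncomputable def singVals {a b : ℕ} (M : Matrix (Fin a) (Fin b) ℝ) :
    Fin (min a b) → ℝ :=
  if a ≤ b then
    fun k => Real.sqrt ((hermMMt M).eigenvalues (Fin.castLE (Nat.min_le_left a b) k))
  else
    fun k => Real.sqrt ((hermMtM M).eigenvalues (Fin.castLE (Nat.min_le_right a b) k))

/-- Subspace distance D₂. -/
noncomputable def D2 {n p q : ℕ} (X : Matrix (Fin n) (Fin p) ℝ)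
    (Y : Matrix (Fin n) (Fin q) ℝ) : ℝ :=
  Real.sqrt (max (p : ℝ) (q : ℝ) - frobSq (Xᵀ * Y))

/-- Principal-angle distance D₁ = ‖arccos σ(XᵀY)‖₂. -/
noncomputable def D1 {n p q : ℕ} (X : Matrix (Fin n) (Fin p) ℝ)
    (Y : Matrix (Fin n) (Fin q) ℝ) : ℝ :=
  Real.sqrt (∑ k, (Real.arccos (singVals (Xᵀ * Y) k)) ^ 2)

lemma frobSq_eq_sum {a b : ℕ} (A : Matrix (Fin a) (Fin b) ℝ) :
    frobSq A = ∑ j, ∑ i, (A i j)^2 := by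
  simp [frobSq, Matrix.trace, Matrix.mul_apply, Matrix.diag, sq]

lemma frobSq_nonneg {a b : ℕ} (A : Matrix (Fin a) (Fin b) ℝ) : 0 ≤ frobSq A := by
  rw [frobSq_eq_sum]; positivity

attribute [local instance] Matrix.frobeniusNormedAddCommGroup

lemma frobSq_eq_norm {a b : ℕ} (A : Matrix (Fin a) (Fin b) ℝ) :
    frobSq A = ‖A‖^2 := by
  rw [frobSq_eq_sum, Matrix.frobenius_norm_def, ← Real.rpow_natCast _ 2,
    ← Real.rpow_mul (by positivity)]
  norm_num
  rw [Finset.sum_comm]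

lemma frob_eq_norm {a b : ℕ} (A : Matrix (Fin a) (Fin b) ℝ) : frob A = ‖A‖ := by
  rw [frob, frobSq_eq_norm, Real.sqrt_sq (norm_nonneg A)]

lemma frob_triangle {a b : ℕ} (A B C : Matrix (Fin a) (Fin b) ℝ) :
    frob (A - B) ≤ frob (A - C) + frob (C - B) := by
  simp only [frob_eq_norm]
  simpa using norm_sub_le_norm_sub_add_norm_sub A C B

lemma trace_proj {n p : ℕ} (X : Matrix (Fin n) (Fin p) ℝ) (hX : hasOrthonormalCols X) :
    (X * Xᵀ).trace = p := by
  rw [Matrix.trace_mul_comm, hX, Matrix.trace_one]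
  simp

lemma frobSq_proj_sub {n p q : ℕ} (X : Matrix (Fin n) (Fin p) ℝ) (Y : Matrix (Fin n) (Fin q) ℝ)
    (hX : hasOrthonormalCols X) (hY : hasOrthonormalCols Y) :
    frobSq (X * Xᵀ - Y * Yᵀ) = p + q - 2 * frobSq (Xᵀ * Y) := by
  have hPX : (X * Xᵀ) * (X * Xᵀ) = X * Xᵀ := by
    rw [Matrix.mul_assoc, ← Matrix.mul_assoc Xᵀ, hX, Matrix.one_mul]
  have hPY : (Y * Yᵀ) * (Y * Yᵀ) = Y * Yᵀ := by
    rw [Matrix.mul_assoc, ← Matrix.mul_assoc Yᵀ, hY, Matrix.one_mul]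
  have hcross : frobSq (Xᵀ * Y) = ((X * Xᵀ) * (Y * Yᵀ)).trace := by
    rw [frobSq, Matrix.transpose_mul, Matrix.transpose_transpose]
    rw [show Yᵀ * X * (Xᵀ * Y) = Yᵀ * (X * Xᵀ * Y) by simp [Matrix.mul_assoc],
      Matrix.trace_mul_comm]
    simp [Matrix.mul_assoc]
  have hT : (X * Xᵀ - Y * Yᵀ)ᵀ = X * Xᵀ - Y * Yᵀ := by
    simp [Matrix.transpose_sub, Matrix.transpose_mul]
  rw [frobSq, hT, Matrix.sub_mul, Matrix.mul_sub, Matrix.mul_sub, hPX, hPY,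
    Matrix.trace_sub, Matrix.trace_sub, Matrix.trace_sub,
    Matrix.trace_mul_comm (Y * Yᵀ) (X * Xᵀ), trace_proj X hX, trace_proj Y hY, hcross]
  ring

lemma D2_eq {n p q : ℕ} (X : Matrix (Fin n) (Fin p) ℝ) (Y : Matrix (Fin n) (Fin q) ℝ)
    (hX : hasOrthonormalCols X) (hY : hasOrthonormalCols Y) :
    D2 X Y = Real.sqrt ((|(p : ℝ) - q| + frob (X * Xᵀ - Y * Yᵀ)^2) / 2) := by
  rw [D2, frob, Real.sq_sqrt (frobSq_nonneg _), frobSq_proj_sub X Y hX hY]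
  congr 1
  rcases le_total (p : ℝ) q with h | h
  · rw [abs_of_nonpos (by linarith), max_eq_right h]; ring
  · rw [abs_of_nonneg (by linarith), max_eq_left h]; ring

lemma sqrt_add_sq_le (a a1 a2 t t1 t2 : ℝ) (ha1 : 0 ≤ a1) (ha2 : 0 ≤ a2)
    (ht1 : 0 ≤ t1) (ht2 : 0 ≤ t2) (ht0 : 0 ≤ t)
    (ha : a ≤ a1 + a2) (ht : t ≤ t1 + t2) :
    Real.sqrt (a + t^2) ≤ Real.sqrt (a1 + t1^2) + Real.sqrt (a2 + t2^2) := by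
  have h1 : t1 ≤ Real.sqrt (a1 + t1^2) := by
    rw [show a1 + t1^2 = t1^2 + a1 by ring]
    exact (Real.sqrt_le_sqrt (by linarith : t1^2 ≤ t1^2 + a1)).trans_eq' (Real.sqrt_sq ht1)
  have h2 : t2 ≤ Real.sqrt (a2 + t2^2) := by
    rw [show a2 + t2^2 = t2^2 + a2 by ring]
    exact (Real.sqrt_le_sqrt (by linarith : t2^2 ≤ t2^2 + a2)).trans_eq' (Real.sqrt_sq ht2)
  have e1 : (Real.sqrt (a1 + t1^2))^2 = a1 + t1^2 := Real.sq_sqrt (by positivity)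
  have e2 : (Real.sqrt (a2 + t2^2))^2 = a2 + t2^2 := Real.sq_sqrt (by positivity)
  have key : a + t^2 ≤ (Real.sqrt (a1 + t1^2) + Real.sqrt (a2 + t2^2))^2 := by
    nlinarith [Real.sqrt_nonneg (a1 + t1^2), Real.sqrt_nonneg (a2 + t2^2),
      mul_le_mul h1 h2 ht2 (Real.sqrt_nonneg (a1 + t1^2))]
  calc Real.sqrt (a + t^2) ≤ Real.sqrt ((Real.sqrt (a1 + t1^2) + Real.sqrt (a2 + t2^2))^2) :=
        Real.sqrt_le_sqrt key
    _ = _ := Real.sqrt_sq (by positivity)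


/-- triangle inequality for D₂. -/
theorem D2_triangle {n p q r : ℕ}
    (X : Matrix (Fin n) (Fin p) ℝ) (Y : Matrix (Fin n) (Fin q) ℝ)
    (Z : Matrix (Fin n) (Fin r) ℝ)
    (hX : hasOrthonormalCols X) (hY : hasOrthonormalCols Y)
    (hZ : hasOrthonormalCols Z) :
    D2 X Y ≤ D2 X Z + D2 Z Y := by
  rw [D2_eq X Y hX hY, D2_eq X Z hX hZ, D2_eq Z Y hZ hY]
  have h2 : (0:ℝ) < 2 := by norm_num
  simp only [div_eq_mul_inv, Real.sqrt_mul' _ (by positivity : (0:ℝ) ≤ 2⁻¹)]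
  rw [← add_mul]
  gcongr ?_ * _
  have hfrob : ∀ {s t : ℕ} (A : Matrix (Fin s) (Fin t) ℝ), 0 ≤ frob A :=
    fun A => Real.sqrt_nonneg _
  exact sqrt_add_sq_le _ _ _ _ _ _ (abs_nonneg _) (abs_nonneg _) (hfrob _) (hfrob _) (hfrob _)
    (abs_sub_le (p:ℝ) r q)
    (frob_triangle _ _ _)
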